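/- Fix 1/2 < σ₀ < 1 and k ≥ 1, and let s₁,…,s_k be complex numbers with σ₀ ≤ Re(s_j). Define F_s(n) = ∑_{n₁,…,n_k ≥ 2, n₁⋯n_k = n} ∏_{ℓ=1}^k Λ(n_ℓ)/(n_ℓ^{s_ℓ} log n_ℓ), where Λ is the von Mangoldt function. Then for every n ≥ 2, |F_s(n)| ≤ (2 log n)^k / n^{σ₀}. -/

import Mathlib

open Complex Real ArithmeticFunction Finset

/-- bound on the Dirichlet coefficients
`F_s(n) = ∑_{n₁⋯n_k = n, nᵢ ≥ 2} ∏_ℓ Λ(n_ℓ)/(n_ℓ^{s_ℓ} log n_ℓ)`: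
for `n ≥ 2` and `σ₀ ≤ Re(s_j)` one has `|F_s(n)| ≤ (2 log n)^k / n^{σ₀}`. -/
theorem coefficient_bound
    (σ₀ : ℝ) (hσ₀ : 1 / 2 < σ₀) (hσ₀' : σ₀ < 1)
    (k : ℕ) (hk : 1 ≤ k)
    (s : Fin k → ℂ) (hs : ∀ j, σ₀ ≤ (s j).re)
    (n : ℕ) (hn : 2 ≤ n) :
    ‖(∑ t ∈ (Fintype.piFinset fun _ : Fin k => Finset.range (n + 1)) |>.filter
          (fun t => (∀ l, 2 ≤ t l) ∧ ∏ l, t l = n),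
        ∏ l, (Λ (t l) : ℂ) / ((t l : ℂ) ^ (s l) * (Real.log (t l) : ℂ)))‖
      ≤ (2 * Real.log n) ^ k / (n : ℝ) ^ σ₀ := by
  classical
  set S := ((Fintype.piFinset fun _ : Fin k => Finset.range (n + 1)).filter
      (fun t => (∀ l, 2 ≤ t l) ∧ ∏ l, t l = n)) with hSdef
  have hn0 : (0:ℝ) < (n:ℝ) := by positivity
  have hnpos : (0:ℝ) < (n:ℝ) ^ σ₀ := Real.rpow_pos_of_pos hn0 _
  have key : ∀ t ∈ S,
      ‖(∏ l, (Λ (t l) : ℂ) / ((t l : ℂ) ^ (s l) * (Real.log (t l) : ℂ)))‖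
        ≤ (∏ l, 2 * Λ (t l)) / (n : ℝ) ^ σ₀ := by
    intro t ht
    simp only [hSdef, Finset.mem_filter] at ht
    obtain ⟨-, ht2, htprod⟩ := ht
    have htpos : ∀ l, (0:ℝ) < (t l : ℝ) := fun l => by
      have := ht2 l; exact_mod_cast lt_of_lt_of_le (by norm_num) this
    have ht1 : ∀ l, (1:ℝ) ≤ (t l : ℝ) := fun l => by
      have := ht2 l; exact_mod_cast le_trans (by norm_num) this
    have ht2' : ∀ l, (2:ℝ) ≤ (t l : ℝ) := fun l => by exact_mod_cast ht2 l
    have habs : ‖(∏ l, (Λ (t l) : ℂ) / ((t l : ℂ) ^ (s l) * (Real.log (t l) : ℂ)))‖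
        = ∏ l, Λ (t l) / ((t l : ℝ) ^ (s l).re * Real.log (t l)) := by
      rw [norm_prod]
      refine Finset.prod_congr rfl fun l _ => ?_
      rw [show ((t l : ℕ) : ℂ) = (((t l : ℝ)) : ℂ) by push_cast; ring]
      rw [norm_div, norm_mul, Complex.norm_cpow_eq_rpow_re_of_pos (htpos l),
        Complex.norm_real, Complex.norm_real, Real.norm_eq_abs, Real.norm_eq_abs,
        _root_.abs_of_nonneg (Real.log_nonneg (ht1 l)),
        _root_.abs_of_nonneg vonMangoldt_nonneg]
    rw [habs]
    have step : ∀ l, Λ (t l) / ((t l : ℝ) ^ (s l).re * Real.log (t l))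
        ≤ 2 * Λ (t l) / (t l : ℝ) ^ σ₀ := by
      intro l
      have hre : ((t l : ℝ)) ^ σ₀ ≤ ((t l : ℝ)) ^ (s l).re :=
        Real.rpow_le_rpow_of_exponent_le (ht1 l) (hs l)
      have hlog2 : (1/2 : ℝ) ≤ Real.log (t l) := by
        have h2 : Real.log 2 ≤ Real.log (t l) := Real.log_le_log (by norm_num) (ht2' l)
        have := Real.log_two_gt_d9
        linarith
      have hden : ((t l : ℝ)) ^ σ₀ * (1/2) ≤ ((t l : ℝ)) ^ (s l).re * Real.log (t l) :=
        mul_le_mul hre hlog2 (by norm_num) (Real.rpow_nonneg (htpos l).le _)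
      have h0 : (0:ℝ) < ((t l : ℝ)) ^ σ₀ * (1/2) :=
        mul_pos (Real.rpow_pos_of_pos (htpos l) _) (by norm_num)
      calc Λ (t l) / ((t l : ℝ) ^ (s l).re * Real.log (t l))
          ≤ Λ (t l) / (((t l : ℝ)) ^ σ₀ * (1/2)) :=
            div_le_div_of_nonneg_left (vonMangoldt_nonneg (n := t l)) h0 hden
        _ = 2 * Λ (t l) / (t l : ℝ) ^ σ₀ := by
            have hp : ((t l : ℝ)) ^ σ₀ ≠ 0 := (Real.rpow_pos_of_pos (htpos l) _).ne'
            field_simp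
    calc ∏ l, Λ (t l) / ((t l : ℝ) ^ (s l).re * Real.log (t l))
        ≤ ∏ l, 2 * Λ (t l) / (t l : ℝ) ^ σ₀ := by
          refine Finset.prod_le_prod (fun l _ => ?_) fun l _ => step l
          exact div_nonneg vonMangoldt_nonneg
            (mul_nonneg (Real.rpow_nonneg (htpos l).le _) (Real.log_nonneg (ht1 l)))
      _ = (∏ l, 2 * Λ (t l)) / (n : ℝ) ^ σ₀ := by
          rw [Finset.prod_div_distrib, Real.finset_prod_rpow _ _ (fun l _ => (htpos l).le)]
          congr 2
          exact_mod_cast congrArg (fun m : ℕ => (m:ℝ)) htprod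
  have hsum : ∑ t ∈ Fintype.piFinset (fun _ : Fin k => n.divisors), ∏ l, 2 * Λ (t l)
      = (2 * Real.log n) ^ k := by
    rw [← Finset.prod_univ_sum (t := fun _ : Fin k => n.divisors) (f := fun _ m => 2 * Λ m)]
    simp [← Finset.mul_sum, vonMangoldt_sum]
  calc ‖(∑ t ∈ S, ∏ l, (Λ (t l) : ℂ) / ((t l : ℂ) ^ (s l) * (Real.log (t l) : ℂ)))‖
      ≤ ∑ t ∈ S, ‖(∏ l, (Λ (t l) : ℂ) / ((t l : ℂ) ^ (s l) * (Real.log (t l) : ℂ)))‖ := by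
        exact norm_sum_le S _
    _ ≤ ∑ t ∈ S, (∏ l, 2 * Λ (t l)) / (n : ℝ) ^ σ₀ := Finset.sum_le_sum key
    _ = (∑ t ∈ S, ∏ l, 2 * Λ (t l)) / (n : ℝ) ^ σ₀ := by rw [Finset.sum_div]
    _ ≤ (∑ t ∈ Fintype.piFinset (fun _ : Fin k => n.divisors), ∏ l, 2 * Λ (t l)) / (n : ℝ) ^ σ₀ := by
        have hsub : S ⊆ Fintype.piFinset (fun _ : Fin k => n.divisors) := by
          intro t ht
          simp only [hSdef, Finset.mem_filter, Fintype.mem_piFinset] at ht ⊢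
          obtain ⟨-, ht2, htprod⟩ := ht
          intro l
          rw [Nat.mem_divisors]
          exact ⟨htprod ▸ Finset.dvd_prod_of_mem _ (Finset.mem_univ l), by omega⟩
        have hmono : (∑ t ∈ S, ∏ l, 2 * Λ (t l))
            ≤ ∑ t ∈ Fintype.piFinset (fun _ : Fin k => n.divisors), ∏ l, 2 * Λ (t l) := by
          apply Finset.sum_le_sum_of_subset_of_nonneg hsub
          intro t _ _
          exact Finset.prod_nonneg fun l _ => mul_nonneg (by norm_num) vonMangoldt_nonneg
        exact (div_le_div_iff_of_pos_right hnpos).mpr hmono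
    _ = (2 * Real.log n) ^ k / (n : ℝ) ^ σ₀ := by rw [hsum]
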